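/- Let X1, X2, X3 be mutually independent finite random variables and Y, Z two other finite random variables. Then I(X2; Y | X1, X3) − I(X2; Z) + I(X1, X2, X3; Y) − I(X1, X2, X3; Z) ≤ I(X2; Y | X1, X3) − I(X1, X2; Z) + I(X1, X2, X3; Y) − I(X2, X3; Z). -/

import Mathlib

open Finset

noncomputable def rvDist {Ω : Type*} [Fintype Ω] {A : Type*} [Fintype A] [DecidableEq A]
    (p : Ω → ℝ) (X : Ω → A) (a : A) : ℝ :=
  ∑ ω, if X ω = a then p ω else 0

noncomputable def rvEnt {Ω : Type*} [Fintype Ω] {A : Type*} [Fintype A] [DecidableEq A]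
    (p : Ω → ℝ) (X : Ω → A) : ℝ :=
  ∑ a, Real.negMulLog (rvDist p X a)

/-- Mutual information `I(X; Y)`. -/
noncomputable def rvMI {Ω : Type*} [Fintype Ω] {A B : Type*} [Fintype A] [DecidableEq A]
    [Fintype B] [DecidableEq B] (p : Ω → ℝ) (X : Ω → A) (Y : Ω → B) : ℝ :=
  rvEnt p X + rvEnt p Y - rvEnt p (fun ω => (X ω, Y ω))

/-- Conditional mutual information `I(X; Y | Z)`. -/
noncomputable def rvCMI {Ω : Type*} [Fintype Ω] {A B C : Type*} [Fintype A] [DecidableEq A]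
    [Fintype B] [DecidableEq B] [Fintype C] [DecidableEq C]
    (p : Ω → ℝ) (X : Ω → A) (Y : Ω → B) (Z : Ω → C) : ℝ :=
  rvEnt p (fun ω => (X ω, Z ω)) + rvEnt p (fun ω => (Y ω, Z ω))
    - rvEnt p (fun ω => (X ω, Y ω, Z ω)) - rvEnt p Z

section lems
variable {Ω : Type*} [Fintype Ω] {A B C : Type*} [Fintype A] [DecidableEq A]
  [Fintype B] [DecidableEq B] [Fintype C] [DecidableEq C] (p : Ω → ℝ)

lemma rvDist_nonneg (hp : ∀ ω, 0 ≤ p ω) (X : Ω → A) (a : A) : 0 ≤ rvDist p X a :=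
  Finset.sum_nonneg fun ω _ => by split <;> simp [hp ω]

lemma sum_rvDist (hsum : ∑ ω, p ω = 1) (X : Ω → A) : ∑ a, rvDist p X a = 1 := by
  unfold rvDist
  rw [Finset.sum_comm]
  simp [hsum]

lemma rvDist_fst (X : Ω → A) (Y : Ω → B) (a : A) :
    ∑ b, rvDist p (fun ω => (X ω, Y ω)) (a, b) = rvDist p X a := by
  unfold rvDist
  rw [Finset.sum_comm]
  refine Finset.sum_congr rfl fun ω _ => ?_
  simp [Prod.ext_iff, ite_and]

lemma rvDist_snd (X : Ω → A) (Y : Ω → B) (b : B) :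
    ∑ a, rvDist p (fun ω => (X ω, Y ω)) (a, b) = rvDist p Y b := by
  unfold rvDist
  rw [Finset.sum_comm]
  refine Finset.sum_congr rfl fun ω _ => ?_
  simp [Prod.ext_iff, ite_and]

lemma rvEnt_comp_equiv (e : A ≃ B) (X : Ω → A) :
    rvEnt p (fun ω => e (X ω)) = rvEnt p X := by
  unfold rvEnt
  refine (Fintype.sum_equiv e _ _ fun a => ?_).symm
  congr 1
  unfold rvDist
  refine Finset.sum_congr rfl fun ω _ => ?_
  simp [e.injective.eq_iff]

end lems

section indep
variable {Ω : Type*} [Fintype Ω] {A B : Type*} [Fintype A] [DecidableEq A]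
  [Fintype B] [DecidableEq B] (p : Ω → ℝ)

lemma rvEnt_pair_of_indep (X : Ω → A) (Y : Ω → B)
    (h : ∀ a b, rvDist p (fun ω => (X ω, Y ω)) (a, b) = rvDist p X a * rvDist p Y b)
    (hX : ∑ a, rvDist p X a = 1) (hY : ∑ b, rvDist p Y b = 1) :
    rvEnt p (fun ω => (X ω, Y ω)) = rvEnt p X + rvEnt p Y := by
  unfold rvEnt
  rw [Fintype.sum_prod_type]
  have : ∀ a b : A × B → ℝ, True := fun _ _ => trivial
  calc ∑ a, ∑ b, Real.negMulLog (rvDist p (fun ω => (X ω, Y ω)) (a, b))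
      = ∑ a, ∑ b, (rvDist p Y b * Real.negMulLog (rvDist p X a)
          + rvDist p X a * Real.negMulLog (rvDist p Y b)) := by
        refine Finset.sum_congr rfl fun a _ => Finset.sum_congr rfl fun b _ => ?_
        rw [h a b, Real.negMulLog_mul]
    _ = _ := by
        simp only [Finset.sum_add_distrib, ← Finset.sum_mul, ← Finset.mul_sum]
        rw [hX, hY]; ring
end indep

lemma key_ineq {t a b c : ℝ} (ht : 0 ≤ t) (ha : 0 < a → (0:ℝ) ≤ 0) : True := trivial

lemma key_pointwise {t a b c : ℝ} (ht : 0 ≤ t) (ha : 0 ≤ a) (hb : 0 ≤ b) (hc : 0 ≤ c)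
    (hta : t ≤ a) (htb : t ≤ b) (hac : a ≤ c) :
    t - a * b / c ≤ t * Real.log t + t * Real.log c - t * Real.log a - t * Real.log b := by
  rcases eq_or_lt_of_le ht with h | h
  · simp only [← h, zero_mul, sub_zero, add_zero, zero_sub, zero_mul]
    have : 0 ≤ a * b / c := by positivity
    simp; linarith
  · have ha' : 0 < a := lt_of_lt_of_le h hta
    have hb' : 0 < b := lt_of_lt_of_le h htb
    have hc' : 0 < c := lt_of_lt_of_le ha' hac
    have hx : 0 < a * b / (t * c) := by positivity
    have hlb := Real.log_le_sub_one_of_pos hx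
    have hlog : Real.log (a * b / (t * c))
        = Real.log a + Real.log b - Real.log t - Real.log c := by
      rw [Real.log_div (by positivity) (by positivity), Real.log_mul ha'.ne' hb'.ne',
        Real.log_mul h.ne' hc'.ne']
      ring
    rw [hlog] at hlb
    have h2 := mul_le_mul_of_nonneg_left hlb ht
    have h3 : t * (a * b / (t * c) - 1) = a * b / c - t := by
      field_simp
    nlinarith [h2, h3]

section submod
variable {Ω : Type*} [Fintype Ω] {A B C : Type*} [Fintype A] [DecidableEq A]
  [Fintype B] [DecidableEq B] [Fintype C] [DecidableEq C] (p : Ω → ℝ)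

lemma rvDist_m1 (X : Ω → A) (Y : Ω → B) (W : Ω → C) (u : A) (w : C) :
    ∑ v, rvDist p (fun ω => (X ω, Y ω, W ω)) (u, v, w)
      = rvDist p (fun ω => (X ω, W ω)) (u, w) := by
  unfold rvDist
  rw [Finset.sum_comm]
  refine Finset.sum_congr rfl fun ω _ => ?_
  simp [Prod.ext_iff, ite_and]

lemma rvDist_m2 (X : Ω → A) (Y : Ω → B) (W : Ω → C) (v : B) (w : C) :
    ∑ u, rvDist p (fun ω => (X ω, Y ω, W ω)) (u, v, w)
      = rvDist p (fun ω => (Y ω, W ω)) (v, w) := by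
  unfold rvDist
  rw [Finset.sum_comm]
  refine Finset.sum_congr rfl fun ω _ => ?_
  simp [Prod.ext_iff, ite_and]

lemma sum_rot {f : A → B → C → ℝ} :
    ∑ u, ∑ v, ∑ w, f u v w = ∑ w, ∑ u, ∑ v, f u v w :=
  (Finset.sum_congr rfl fun _ _ => Finset.sum_comm).trans Finset.sum_comm

lemma rvEnt_submod (hp : ∀ ω, 0 ≤ p ω) (X : Ω → A) (Y : Ω → B) (W : Ω → C) :
    rvEnt p W + rvEnt p (fun ω => (X ω, Y ω, W ω))
      ≤ rvEnt p (fun ω => (X ω, W ω)) + rvEnt p (fun ω => (Y ω, W ω)) := by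
  set t : A → B → C → ℝ := fun u v w => rvDist p (fun ω => (X ω, Y ω, W ω)) (u, v, w) with htdef
  set a : A → C → ℝ := fun u w => rvDist p (fun ω => (X ω, W ω)) (u, w) with hadef
  set b : B → C → ℝ := fun v w => rvDist p (fun ω => (Y ω, W ω)) (v, w) with hbdef
  set c : C → ℝ := fun w => rvDist p W w with hcdef
  have ht0 : ∀ u v w, 0 ≤ t u v w := fun u v w => rvDist_nonneg p hp _ _
  have ha0 : ∀ u w, 0 ≤ a u w := fun u w => rvDist_nonneg p hp _ _
  have hb0 : ∀ v w, 0 ≤ b v w := fun v w => rvDist_nonneg p hp _ _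
  have hc0 : ∀ w, 0 ≤ c w := fun w => rvDist_nonneg p hp _ _
  have m1 : ∀ u w, ∑ v, t u v w = a u w := fun u w => rvDist_m1 p X Y W u w
  have m2 : ∀ v w, ∑ u, t u v w = b v w := fun v w => rvDist_m2 p X Y W v w
  have mac : ∀ w, ∑ u, a u w = c w := fun w => rvDist_snd p X W w
  have mbc : ∀ w, ∑ v, b v w = c w := fun w => rvDist_snd p Y W w
  have hta : ∀ u v w, t u v w ≤ a u w := fun u v w => by
    rw [← m1 u w]
    exact Finset.single_le_sum (fun v' _ => ht0 u v' w) (Finset.mem_univ v)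
  have htb : ∀ u v w, t u v w ≤ b v w := fun u v w => by
    rw [← m2 v w]
    exact Finset.single_le_sum (fun u' _ => ht0 u' v w) (Finset.mem_univ u)
  have hac : ∀ u w, a u w ≤ c w := fun u w => by
    rw [← mac w]
    exact Finset.single_le_sum (fun u' _ => ha0 u' w) (Finset.mem_univ u)
  -- rewrite all entropies as triple sums
  have HT : rvEnt p (fun ω => (X ω, Y ω, W ω))
      = ∑ u, ∑ v, ∑ w, -(t u v w * Real.log (t u v w)) := by
    unfold rvEnt
    rw [Fintype.sum_prod_type]
    refine Finset.sum_congr rfl fun u _ => ?_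
    rw [Fintype.sum_prod_type]
    exact Finset.sum_congr rfl fun v _ => Finset.sum_congr rfl fun w _ => by
      simp [Real.negMulLog]; rfl
  have HA : rvEnt p (fun ω => (X ω, W ω))
      = ∑ u, ∑ v, ∑ w, -(t u v w * Real.log (a u w)) := by
    unfold rvEnt
    rw [Fintype.sum_prod_type]
    refine Finset.sum_congr rfl fun u _ => ?_
    rw [Finset.sum_comm]
    refine Finset.sum_congr rfl fun w _ => ?_
    have : ∑ v, -(t u v w * Real.log (a u w)) = -((∑ v, t u v w) * Real.log (a u w)) := by
      rw [Finset.sum_mul]; simp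
    rw [this, m1]
    simp [Real.negMulLog]; rfl
  have HB : rvEnt p (fun ω => (Y ω, W ω))
      = ∑ u, ∑ v, ∑ w, -(t u v w * Real.log (b v w)) := by
    unfold rvEnt
    rw [Fintype.sum_prod_type]
    rw [show ∑ u, ∑ v, ∑ w, -(t u v w * Real.log (b v w))
        = ∑ v, ∑ u, ∑ w, -(t u v w * Real.log (b v w)) from Finset.sum_comm]
    refine Finset.sum_congr rfl fun v _ => ?_
    rw [Finset.sum_comm]
    refine Finset.sum_congr rfl fun w _ => ?_
    have : ∑ u, -(t u v w * Real.log (b v w)) = -((∑ u, t u v w) * Real.log (b v w)) := by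
      rw [Finset.sum_mul]; simp
    rw [this, m2]
    simp [Real.negMulLog]; rfl
  have mtc : ∀ w, ∑ u, ∑ v, t u v w = c w := fun w => by
    rw [← mac w]; exact Finset.sum_congr rfl fun u _ => m1 u w
  have HC : rvEnt p W = ∑ u, ∑ v, ∑ w, -(t u v w * Real.log (c w)) := by
    unfold rvEnt
    rw [sum_rot]
    refine Finset.sum_congr rfl fun w _ => ?_
    have : ∑ u, ∑ v, -(t u v w * Real.log (c w)) = -((∑ u, ∑ v, t u v w) * Real.log (c w)) := by
      simp [Finset.sum_mul, Finset.sum_neg_distrib]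
    rw [this, mtc]
    simp [Real.negMulLog]; rfl
  rw [HT, HA, HB, HC]
  -- reduce to a single sum inequality
  have main : (0:ℝ) ≤ ∑ u, ∑ v, ∑ w,
      (t u v w * Real.log (t u v w) + t u v w * Real.log (c w)
        - t u v w * Real.log (a u w) - t u v w * Real.log (b v w)) := by
    have lower : ∀ u v w, t u v w - a u w * b v w / c w
        ≤ t u v w * Real.log (t u v w) + t u v w * Real.log (c w)
          - t u v w * Real.log (a u w) - t u v w * Real.log (b v w) :=
      fun u v w => key_pointwise (ht0 u v w) (ha0 u w) (hb0 v w) (hc0 w)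
        (hta u v w) (htb u v w) (hac u w)
    have sum_lower : ∑ u, ∑ v, ∑ w, (t u v w - a u w * b v w / c w) = 0 := by
      have step : ∀ w, ∑ u, ∑ v, (t u v w - a u w * b v w / c w) = 0 := by
        intro w
        have e1 : ∑ u, ∑ v, (t u v w - a u w * b v w / c w)
            = (∑ u, ∑ v, t u v w) - ∑ u, ∑ v, a u w * b v w / c w := by
          simp [Finset.sum_sub_distrib]
        rw [e1, mtc]
        have e2 : ∑ u, ∑ v, a u w * b v w / c w = (∑ u, a u w) * (∑ v, b v w) / c w := by
          rw [Finset.sum_mul_sum]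
          rw [Finset.sum_div]
          refine Finset.sum_congr rfl fun u _ => ?_
          rw [Finset.sum_div]
        rw [e2, mac, mbc]
        rcases eq_or_lt_of_le (hc0 w) with h | h
        · rw [← h]; simp
        · rw [mul_div_assoc, div_self h.ne', mul_one, sub_self]
      rw [sum_rot]
      exact Finset.sum_eq_zero fun w _ => step w
    calc (0:ℝ) = ∑ u, ∑ v, ∑ w, (t u v w - a u w * b v w / c w) := sum_lower.symm
      _ ≤ _ := by
          refine Finset.sum_le_sum fun u _ => Finset.sum_le_sum fun v _ =>
            Finset.sum_le_sum fun w _ => lower u v w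
  simp only [Finset.sum_sub_distrib, Finset.sum_add_distrib] at main
  simp only [Finset.sum_neg_distrib]
  linarith [main]

end submod

def myE2 (A2 A3 C : Type*) : A3 × (A2 × C) ≃ (A2 × A3) × C :=
  ⟨fun x => ((x.2.1, x.1), x.2.2), fun y => (y.1.2, (y.1.1, y.2)),
    fun x => rfl, fun y => rfl⟩

def myE3 (A1 A2 A3 C : Type*) : A1 × (A3 × (A2 × C)) ≃ (A1 × A2 × A3) × C :=
  ⟨fun x => ((x.1, (x.2.2.1, x.2.1)), x.2.2.2),
    fun y => (y.1.1, (y.1.2.2, (y.1.2.1, y.2))), fun x => rfl, fun y => rfl⟩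

lemma rvDist_m3 {Ω : Type*} [Fintype Ω] {A B C : Type*} [Fintype A] [DecidableEq A]
    [Fintype B] [DecidableEq B] [Fintype C] [DecidableEq C] (p : Ω → ℝ)
    (X : Ω → A) (Y : Ω → B) (W : Ω → C) (u : A) (v : B) :
    ∑ w, rvDist p (fun ω => (X ω, Y ω, W ω)) (u, v, w)
      = rvDist p (fun ω => (X ω, Y ω)) (u, v) := by
  unfold rvDist
  rw [Finset.sum_comm]
  refine Finset.sum_congr rfl fun ω _ => ?_
  simp [Prod.ext_iff, ite_and]


theorem stmt18 {Ω A1 A2 A3 B C : Type*} [Fintype Ω]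
    [Fintype A1] [DecidableEq A1] [Fintype A2] [DecidableEq A2]
    [Fintype A3] [DecidableEq A3] [Fintype B] [DecidableEq B] [Fintype C] [DecidableEq C]
    (p : Ω → ℝ) (hp : ∀ ω, 0 ≤ p ω) (hsum : ∑ ω, p ω = 1)
    (X1 : Ω → A1) (X2 : Ω → A2) (X3 : Ω → A3) (Y : Ω → B) (Z : Ω → C)
    (hindep : ∀ a1 a2 a3, rvDist p (fun ω => (X1 ω, X2 ω, X3 ω)) (a1, a2, a3)
      = rvDist p X1 a1 * rvDist p X2 a2 * rvDist p X3 a3) :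
    rvCMI p X2 Y (fun ω => (X1 ω, X3 ω)) - rvMI p X2 Z
        + rvMI p (fun ω => (X1 ω, X2 ω, X3 ω)) Y - rvMI p (fun ω => (X1 ω, X2 ω, X3 ω)) Z
      ≤ rvCMI p X2 Y (fun ω => (X1 ω, X3 ω)) - rvMI p (fun ω => (X1 ω, X2 ω)) Z
        + rvMI p (fun ω => (X1 ω, X2 ω, X3 ω)) Y - rvMI p (fun ω => (X2 ω, X3 ω)) Z := by
  have s1 := sum_rvDist p hsum X1
  have s2 := sum_rvDist p hsum X2
  have s3 := sum_rvDist p hsum X3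
  have s23 := sum_rvDist p hsum (fun ω => (X2 ω, X3 ω))
  have ind23 : ∀ a2 a3, rvDist p (fun ω => (X2 ω, X3 ω)) (a2, a3)
      = rvDist p X2 a2 * rvDist p X3 a3 := by
    intro a2 a3
    have h := rvDist_snd p X1 (fun ω => (X2 ω, X3 ω)) (a2, a3)
    rw [← h]
    calc ∑ a1, rvDist p (fun ω => (X1 ω, X2 ω, X3 ω)) (a1, a2, a3)
        = ∑ a1, rvDist p X1 a1 * (rvDist p X2 a2 * rvDist p X3 a3) := by
          refine Finset.sum_congr rfl fun a1 _ => ?_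
          rw [hindep a1 a2 a3]; ring
      _ = rvDist p X2 a2 * rvDist p X3 a3 := by rw [← Finset.sum_mul, s1, one_mul]
  have ind12 : ∀ a1 a2, rvDist p (fun ω => (X1 ω, X2 ω)) (a1, a2)
      = rvDist p X1 a1 * rvDist p X2 a2 := by
    intro a1 a2
    have h := rvDist_m3 p X1 X2 X3 a1 a2
    rw [← h]
    calc ∑ a3, rvDist p (fun ω => (X1 ω, X2 ω, X3 ω)) (a1, a2, a3)
        = ∑ a3, rvDist p X1 a1 * rvDist p X2 a2 * rvDist p X3 a3 := by
          exact Finset.sum_congr rfl fun a3 _ => hindep a1 a2 a3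
      _ = rvDist p X1 a1 * rvDist p X2 a2 := by rw [← Finset.mul_sum, s3, mul_one]
  have h23 : rvEnt p (fun ω => (X2 ω, X3 ω)) = rvEnt p X2 + rvEnt p X3 :=
    rvEnt_pair_of_indep p X2 X3 ind23 s2 s3
  have h12 : rvEnt p (fun ω => (X1 ω, X2 ω)) = rvEnt p X1 + rvEnt p X2 :=
    rvEnt_pair_of_indep p X1 X2 ind12 s1 s2
  have h123 : rvEnt p (fun ω => (X1 ω, X2 ω, X3 ω))
      = rvEnt p X1 + rvEnt p (fun ω => (X2 ω, X3 ω)) := by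
    refine rvEnt_pair_of_indep p X1 (fun ω => (X2 ω, X3 ω)) ?_ s1 s23
    rintro a1 ⟨a2, a3⟩
    rw [ind23, hindep a1 a2 a3, mul_assoc]
  have submod := rvEnt_submod p hp X1 X3 (fun ω => (X2 ω, Z ω))
  have E1 : rvEnt p (fun ω => ((X1 ω, X2 ω), Z ω))
      = rvEnt p (fun ω => (X1 ω, (X2 ω, Z ω))) := by
    rw [← rvEnt_comp_equiv p (Equiv.prodAssoc A1 A2 C).symm
      (fun ω => (X1 ω, (X2 ω, Z ω)))]
    rfl
  have E2 : rvEnt p (fun ω => ((X2 ω, X3 ω), Z ω))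
      = rvEnt p (fun ω => (X3 ω, (X2 ω, Z ω))) := by
    rw [← rvEnt_comp_equiv p (myE2 A2 A3 C) (fun ω => (X3 ω, (X2 ω, Z ω)))]
    rfl
  have E3 : rvEnt p (fun ω => ((X1 ω, X2 ω, X3 ω), Z ω))
      = rvEnt p (fun ω => (X1 ω, (X3 ω, (X2 ω, Z ω)))) := by
    rw [← rvEnt_comp_equiv p (myE3 A1 A2 A3 C) (fun ω => (X1 ω, (X3 ω, (X2 ω, Z ω))))]
    rfl
  simp only [rvMI, rvCMI]
  linarith [submod, E1, E2, E3, h12, h23, h123]
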